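/- Let λ ≤ Λ be a speed function, f 1-Lipschitz nondecreasing, and h the corresponding Hopf–Lax function. Then for all ξ ∈ ℝ and t ≤ t' ∈ [0,T]: 0 ≤ h(t',ξ) − h(t,ξ) ≤ (Λ/4)·(t' − t). -/

import Mathlib

/-- The Hopf–Lax kernel `φ`. -/
noncomputable def hlKernel (ξ : ℝ) : ℝ :=
  if ξ ≤ -1 then 0 else if ξ < 1 then (ξ + 1) ^ 2 / 4 else ξ

/-- A path is piecewise `C¹` on `[a,b]`: it is continuous, and `C¹` on each piece of
some finite partition of `[a,b]`. -/
def PiecewiseC1On (w : ℝ → ℝ) (a b : ℝ) : Prop :=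
  ContinuousOn w (Set.Icc a b) ∧
  ∃ (k : ℕ) (s : Fin (k + 1) → ℝ), StrictMono s ∧ s 0 = a ∧ s (Fin.last k) = b ∧
    ∀ i : Fin k, ContDiffOn ℝ 1 w (Set.Icc (s i.castSucc) (s i.succ))

/-- The Hopf–Lax function for a space-time dependent speed `λ` and initial data `f`. -/
noncomputable def hopfLax (lam : ℝ → ℝ → ℝ) (f : ℝ → ℝ) (t ξ : ℝ) : ℝ :=
  sInf {y : ℝ | ∃ w : ℝ → ℝ, PiecewiseC1On w 0 t ∧ w t = ξ ∧
    y = (∫ s in (0:ℝ)..t, lam s (w s) * hlKernel (deriv w s / lam s (w s))) + f (w 0)}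

open Set MeasureTheory intervalIntegral

namespace HLAux

lemma kernel_nonneg (x : ℝ) : 0 ≤ hlKernel x := by
  unfold hlKernel; split_ifs with h1 h2
  · exact le_refl 0
  · positivity
  · linarith

lemma kernel_ge (x : ℝ) : x ≤ hlKernel x := by
  unfold hlKernel; split_ifs with h1 h2
  · linarith
  · nlinarith
  · exact le_refl x

lemma kernel_zero : hlKernel 0 = 1 / 4 := by norm_num [hlKernel]

lemma measurable_hlKernel : Measurable hlKernel := by
  unfold hlKernel
  exact Measurable.ite measurableSet_Iic measurable_const
    (Measurable.ite measurableSet_Iio (by fun_prop) measurable_id)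

lemma key_le {u c Λ : ℝ} (hu : 0 < u) (huΛ : u ≤ Λ) :
    u * hlKernel (c / u) ≤ max c 0 + Λ / 4 := by
  have hΛ : 0 < Λ := lt_of_lt_of_le hu huΛ
  unfold hlKernel; split_ifs with h1 h2
  · have := le_max_right c 0; linarith
  · have hcu : c < u := (div_lt_one hu).mp h2
    have hcu' : -u < c := by
      rw [not_le] at h1
      have := (lt_div_iff₀ hu).mp h1; linarith
    have heq : u * ((c / u + 1) ^ 2 / 4) = (c + u) ^ 2 / (4 * u) := by
      field_simp
    rw [heq, div_le_iff₀ (by positivity)]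
    rcases le_or_gt 0 c with hc | hc
    · rw [max_eq_left hc]; nlinarith
    · rw [max_eq_right hc.le]; nlinarith
  · rw [mul_div_cancel₀ _ hu.ne']
    have := le_max_left c 0; linarith

/-- The integrand of the Hopf–Lax cost. -/
noncomputable def ig (lam : ℝ → ℝ → ℝ) (w : ℝ → ℝ) (s : ℝ) : ℝ :=
  lam s (w s) * hlKernel (deriv w s / lam s (w s))

variable {lam : ℝ → ℝ → ℝ} {Λ : ℝ} {w v : ℝ → ℝ} {a b c : ℝ}

lemma ig_nonneg (hpos : ∀ t ξ, 0 < lam t ξ) (s : ℝ) : 0 ≤ ig lam w s :=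
  mul_nonneg (hpos s (w s)).le (kernel_nonneg _)

lemma ig_ge (hpos : ∀ t ξ, 0 < lam t ξ) (s : ℝ) : deriv w s ≤ ig lam w s := by
  have h := mul_le_mul_of_nonneg_left (kernel_ge (deriv w s / lam s (w s))) (hpos s (w s)).le
  rwa [mul_div_cancel₀ _ (hpos s (w s)).ne'] at h

lemma ig_le (hpos : ∀ t ξ, 0 < lam t ξ) (hbd : ∀ t ξ, lam t ξ ≤ Λ) (s : ℝ) :
    ig lam w s ≤ max (deriv w s) 0 + Λ / 4 :=
  key_le (hpos s (w s)) (hbd s (w s))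

lemma deriv_eq_derivWithin (hw : ContDiffOn ℝ 1 w (Icc a b)) {x : ℝ} (hx : x ∈ Ioo a b) :
    deriv w x = derivWithin w (Icc a b) x :=
  (derivWithin_of_mem_nhds (Icc_mem_nhds hx.1 hx.2)).symm

lemma restrict_Icc_eq_Ioo : (volume : Measure ℝ).restrict (Icc a b) = volume.restrict (Ioo a b) :=
  Measure.restrict_congr_set Ioo_ae_eq_Icc.symm

lemma onepiece_ftcint (hab : a ≤ b) (hw : ContDiffOn ℝ 1 w (Icc a b)) :
    IntervalIntegrable (deriv w) volume a b ∧
      ∫ x in a..b, deriv w x = w b - w a := by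
  rcases eq_or_lt_of_le hab with rfl | hab
  · exact ⟨IntervalIntegrable.refl, by simp⟩
  have hU : UniqueDiffOn ℝ (Icc a b) := uniqueDiffOn_Icc hab
  have dcont : ContinuousOn (derivWithin w (Icc a b)) (Icc a b) :=
    hw.continuousOn_derivWithin hU le_rfl
  have hint0 : IntegrableOn (derivWithin w (Icc a b)) (Icc a b) volume :=
    dcont.integrableOn_Icc
  have hae : derivWithin w (Icc a b) =ᵐ[volume.restrict (Icc a b)] deriv w := by
    rw [restrict_Icc_eq_Ioo]
    filter_upwards [ae_restrict_mem measurableSet_Ioo] with x hx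
    exact (deriv_eq_derivWithin hw hx).symm
  have hint : IntegrableOn (deriv w) (Icc a b) volume := hint0.congr_fun_ae hae
  have hii : IntervalIntegrable (deriv w) volume a b := by
    rw [intervalIntegrable_iff_integrableOn_Icc_of_le hab.le]; exact hint
  refine ⟨hii, ?_⟩
  exact integral_eq_sub_of_hasDerivAt_of_le hab.le hw.continuousOn
    (fun x hx => ((hw.differentiableOn one_ne_zero x (Ioo_subset_Icc_self hx)).differentiableAt
      (Icc_mem_nhds hx.1 hx.2)).hasDerivAt) hii

lemma onepiece_integrable (hmeas : Measurable (Function.uncurry lam))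
    (hpos : ∀ t ξ, 0 < lam t ξ) (hbd : ∀ t ξ, lam t ξ ≤ Λ)
    (hab : a ≤ b) (hw : ContDiffOn ℝ 1 w (Icc a b)) :
    IntervalIntegrable (ig lam w) volume a b := by
  rcases eq_or_lt_of_le hab with rfl | hab
  · exact IntervalIntegrable.refl
  rw [intervalIntegrable_iff_integrableOn_Icc_of_le hab.le]
  have hU : UniqueDiffOn ℝ (Icc a b) := uniqueDiffOn_Icc hab
  have dcont : ContinuousOn (derivWithin w (Icc a b)) (Icc a b) :=
    hw.continuousOn_derivWithin hU le_rfl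
  obtain ⟨M, hM⟩ := isCompact_Icc.exists_bound_of_continuousOn dcont
  have hwm : AEMeasurable w (volume.restrict (Icc a b)) :=
    hw.continuousOn.aemeasurable measurableSet_Icc
  have hlam : AEMeasurable (fun s => lam s (w s)) (volume.restrict (Icc a b)) :=
    hmeas.comp_aemeasurable (aemeasurable_id.prodMk hwm)
  have hder : Measurable (deriv w) := measurable_deriv w
  have hig : AEMeasurable (ig lam w) (volume.restrict (Icc a b)) :=
    hlam.mul (measurable_hlKernel.comp_aemeasurable (hder.aemeasurable.div hlam))
  refine Integrable.mono' (g := fun _ => M + Λ / 4) (integrable_const _)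
    hig.aestronglyMeasurable ?_
  rw [restrict_Icc_eq_Ioo]
  filter_upwards [ae_restrict_mem measurableSet_Ioo] with x hx
  have h1 : ig lam w x ≤ max (deriv w x) 0 + Λ / 4 := ig_le hpos hbd x
  have h2 : ‖derivWithin w (Icc a b) x‖ ≤ M := hM x (Ioo_subset_Icc_self hx)
  rw [← deriv_eq_derivWithin hw hx, Real.norm_eq_abs] at h2
  rw [Real.norm_eq_abs, abs_of_nonneg (ig_nonneg hpos x)]
  rcases le_or_gt (deriv w x) 0 with h | h
  · rw [max_eq_right h] at h1; have := abs_nonneg (deriv w x); linarith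
  · rw [max_eq_left h.le] at h1
    have := le_abs_self (deriv w x); linarith

lemma pc_le (h : PiecewiseC1On w a b) : a ≤ b := by
  obtain ⟨-, k, s, hs, h0, hl, -⟩ := h
  rw [← h0, ← hl]; exact hs.monotone (Fin.zero_le _)

lemma aux_int (hmeas : Measurable (Function.uncurry lam))
    (hpos : ∀ t ξ, 0 < lam t ξ) (hbd : ∀ t ξ, lam t ξ ≤ Λ) :
    ∀ (k : ℕ) (s : Fin (k + 1) → ℝ), StrictMono s →
      (∀ i : Fin k, ContDiffOn ℝ 1 w (Icc (s i.castSucc) (s i.succ))) →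
      IntervalIntegrable (ig lam w) volume (s 0) (s (Fin.last k)) := by
  intro k
  induction k with
  | zero => intro s _ _; exact IntervalIntegrable.refl
  | succ k ih =>
    intro s hs hp
    have h1 : IntervalIntegrable (ig lam w) volume (s 0) (s 1) := by
      have := hp 0
      simp only [Fin.castSucc_zero, Fin.succ_zero_eq_one] at this
      exact onepiece_integrable hmeas hpos hbd (hs.monotone (by simp [Fin.le_def])) this
    have h2 : IntervalIntegrable (ig lam w) volume (s 1) (s (Fin.last (k + 1))) := by
      have := ih (s ∘ Fin.succ) (hs.comp Fin.strictMono_succ) (fun i => by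
        have := hp i.succ
        simpa only [Function.comp_apply, Fin.succ_castSucc] using this)
      simpa only [Function.comp_apply, Fin.succ_last, Fin.succ_zero_eq_one] using this
    exact h1.trans h2

lemma aux_ftc : ∀ (k : ℕ) (s : Fin (k + 1) → ℝ), StrictMono s →
    (∀ i : Fin k, ContDiffOn ℝ 1 w (Icc (s i.castSucc) (s i.succ))) →
    ∀ c, s 0 ≤ c → c ≤ s (Fin.last k) →
      IntervalIntegrable (deriv w) volume c (s (Fin.last k)) ∧
        ∫ x in c..(s (Fin.last k)), deriv w x = w (s (Fin.last k)) - w c := by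
  intro k
  induction k with
  | zero =>
    intro s _ _ c h1 h2
    have : c = s (Fin.last 0) := le_antisymm h2 h1
    subst this
    exact ⟨IntervalIntegrable.refl, by simp⟩
  | succ k ih =>
    intro s hs hp c hc1 hc2
    rcases le_or_gt c (s 1) with h | h
    · have hcd : ContDiffOn ℝ 1 w (Icc c (s 1)) := by
        have := hp 0
        simp only [Fin.castSucc_zero, Fin.succ_zero_eq_one] at this
        exact this.mono (Icc_subset_Icc hc1 le_rfl)
      obtain ⟨i1, e1⟩ := onepiece_ftcint h hcd
      obtain ⟨i2, e2⟩ := ih (s ∘ Fin.succ) (hs.comp Fin.strictMono_succ) (fun i => by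
          have := hp i.succ
          simpa only [Function.comp_apply, Fin.succ_castSucc] using this)
        (s 1) (by simp [Fin.succ_zero_eq_one]) (by
          simp only [Function.comp_apply, Fin.succ_last]
          exact hs.monotone (Fin.le_last _))
      simp only [Function.comp_apply, Fin.succ_last, Fin.succ_zero_eq_one] at i2 e2
      refine ⟨i1.trans i2, ?_⟩
      rw [← integral_add_adjacent_intervals i1 i2, e1, e2]; ring
    · obtain ⟨i2, e2⟩ := ih (s ∘ Fin.succ) (hs.comp Fin.strictMono_succ) (fun i => by
          have := hp i.succ
          simpa only [Function.comp_apply, Fin.succ_castSucc] using this)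
        c (by simpa [Fin.succ_zero_eq_one] using h.le) (by
          simpa only [Function.comp_apply, Fin.succ_last] using hc2)
      simpa only [Function.comp_apply, Fin.succ_last] using ⟨i2, e2⟩

lemma pc_refl (hw : ContinuousOn w (Icc a a)) : PiecewiseC1On w a a :=
  ⟨hw, 0, fun _ => a, by
    intro i j hij
    exfalso
    have h1 : (i : ℕ) < (j : ℕ) := hij
    have := j.isLt
    omega, rfl, rfl, fun i => i.elim0⟩

lemma pc_two (hab : a < b) (hc : ContinuousOn w (Icc a b))
    (hw : ContDiffOn ℝ 1 w (Icc a b)) : PiecewiseC1On w a b := by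
  refine ⟨hc, 1, ![a, b], ?_, rfl, rfl, ?_⟩
  · rw [Fin.strictMono_iff_lt_succ]
    intro i
    fin_cases i
    simpa using hab
  · intro i
    fin_cases i
    simpa using hw

lemma pc_congr (h : EqOn v w (Icc a b)) (hw : PiecewiseC1On w a b) :
    PiecewiseC1On v a b := by
  obtain ⟨hc, k, s, hs, h0, hl, hp⟩ := hw
  have hmem : ∀ i : Fin (k + 1), s i ∈ Icc a b := fun i =>
    ⟨h0 ▸ hs.monotone (Fin.zero_le _), hl ▸ hs.monotone (Fin.le_last _)⟩
  refine ⟨hc.congr h, k, s, hs, h0, hl, fun i => (hp i).congr (fun x hx => h ?_)⟩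
  exact Icc_subset_Icc (hmem i.castSucc).1 (hmem i.succ).2 hx

lemma pc_snoc (hw : PiecewiseC1On w a b) (hbb : b < b')
    (hc : ContinuousOn w (Icc a b')) (hd : ContDiffOn ℝ 1 w (Icc b b')) :
    PiecewiseC1On w a b' := by
  obtain ⟨-, k, s, hs, h0, hl, hp⟩ := hw
  refine ⟨hc, k + 1, Fin.snoc s b', ?_, ?_, ?_, ?_⟩
  · rw [Fin.strictMono_iff_lt_succ]
    intro i
    refine Fin.lastCases ?_ (fun j => ?_) i
    · rw [Fin.snoc_castSucc, Fin.succ_last, Fin.snoc_last, hl]; exact hbb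
    · rw [Fin.snoc_castSucc, Fin.succ_castSucc, Fin.snoc_castSucc]
      exact hs (Fin.castSucc_lt_succ (i := j))
  · rw [show (0 : Fin (k + 2)) = Fin.castSucc 0 from rfl, Fin.snoc_castSucc, h0]
  · rw [Fin.snoc_last]
  · intro i
    refine Fin.lastCases ?_ (fun j => ?_) i
    · rw [Fin.snoc_castSucc, Fin.succ_last, Fin.snoc_last, hl]; exact hd
    · rw [Fin.snoc_castSucc, Fin.succ_castSucc, Fin.snoc_castSucc]
      exact hp j

lemma aux_left : ∀ (k : ℕ) (s : Fin (k + 1) → ℝ), StrictMono s →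
    (∀ i : Fin k, ContDiffOn ℝ 1 w (Icc (s i.castSucc) (s i.succ))) →
    ContinuousOn w (Icc (s 0) (s (Fin.last k))) →
    ∀ c, s 0 ≤ c → c ≤ s (Fin.last k) → PiecewiseC1On w (s 0) c := by
  intro k
  induction k with
  | zero =>
    intro s _ _ hc c h1 h2
    have : c = s (Fin.last 0) := le_antisymm h2 h1
    subst this
    exact pc_refl hc
  | succ k ih =>
    intro s hs hp hc c hc1 hc2
    have h01 : s 0 < s 1 := hs (by simp [Fin.lt_def])
    have hlast : s 1 ≤ s (Fin.last (k + 1)) := hs.monotone (Fin.le_last _)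
    rcases le_or_gt c (s 1) with h | h
    · rcases eq_or_lt_of_le hc1 with rfl | hc1'
      · exact pc_refl (hc.mono (Icc_subset_Icc le_rfl hc2))
      · have hp0 := hp 0
        simp only [Fin.castSucc_zero, Fin.succ_zero_eq_one] at hp0
        exact pc_two hc1' (hc.mono (Icc_subset_Icc le_rfl (le_trans h hlast)))
          (hp0.mono (Icc_subset_Icc le_rfl h))
    · have htail := ih (s ∘ Fin.succ) (hs.comp Fin.strictMono_succ) (fun i => by
          have := hp i.succ
          simpa only [Function.comp_apply, Fin.succ_castSucc] using this)
        (by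
          simp only [Function.comp_apply, Fin.succ_zero_eq_one, Fin.succ_last]
          exact hc.mono (Icc_subset_Icc (le_of_lt h01) le_rfl))
        c (by simpa [Fin.succ_zero_eq_one] using h.le) (by
          simpa only [Function.comp_apply, Fin.succ_last] using hc2)
      simp only [Function.comp_apply, Fin.succ_zero_eq_one] at htail
      obtain ⟨hc', k', s'', hs'', h0'', hl'', hp''⟩ := htail
      refine ⟨hc.mono (Icc_subset_Icc le_rfl hc2), k' + 1, Fin.cons (s 0) s'', ?_, rfl, ?_, ?_⟩
      · rw [Fin.strictMono_iff_lt_succ]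
        intro i
        refine Fin.cases ?_ (fun j => ?_) i
        · rw [Fin.castSucc_zero, Fin.cons_zero, Fin.cons_succ, h0'']
          exact h01
        · rw [← Fin.succ_castSucc, Fin.cons_succ, Fin.cons_succ]
          exact hs'' (Fin.castSucc_lt_succ (i := j))
      · rw [show Fin.last (k' + 1) = (Fin.last k').succ from (Fin.succ_last k').symm,
          Fin.cons_succ, hl'']
      · intro i
        refine Fin.cases ?_ (fun j => ?_) i
        · rw [Fin.castSucc_zero, Fin.cons_zero, Fin.cons_succ, h0'']
          have hp0 := hp 0
          simp only [Fin.castSucc_zero, Fin.succ_zero_eq_one] at hp0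
          exact hp0
        · rw [← Fin.succ_castSucc, Fin.cons_succ, Fin.cons_succ]
          exact hp'' j

lemma pc_int (hmeas : Measurable (Function.uncurry lam))
    (hpos : ∀ t ξ, 0 < lam t ξ) (hbd : ∀ t ξ, lam t ξ ≤ Λ)
    (h : PiecewiseC1On w a b) : IntervalIntegrable (ig lam w) volume a b := by
  obtain ⟨-, k, s, hs, h0, hl, hp⟩ := h
  subst h0; subst hl
  exact aux_int hmeas hpos hbd k s hs hp

lemma pc_lower (hmeas : Measurable (Function.uncurry lam))
    (hpos : ∀ t ξ, 0 < lam t ξ) (hbd : ∀ t ξ, lam t ξ ≤ Λ)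
    (h : PiecewiseC1On w a b) (hc : c ∈ Icc a b) :
    max (w b - w c) 0 ≤ ∫ x in c..b, ig lam w x := by
  have hint : IntervalIntegrable (ig lam w) volume c b :=
    (pc_int hmeas hpos hbd h).mono_set
      (by rw [uIcc_of_le hc.2, uIcc_of_le (pc_le h)]; exact Icc_subset_Icc hc.1 le_rfl)
  obtain ⟨-, k, s, hs, h0, hl, hp⟩ := h
  subst h0; subst hl
  obtain ⟨hd, he⟩ := aux_ftc k s hs hp c hc.1 hc.2
  have h1 : w (s (Fin.last k)) - w c ≤ ∫ x in c..(s (Fin.last k)), ig lam w x := by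
    rw [← he]
    exact integral_mono_on hc.2 hd hint (fun x _ => ig_ge hpos x)
  have h2 : (0:ℝ) ≤ ∫ x in c..(s (Fin.last k)), ig lam w x :=
    integral_nonneg hc.2 (fun x _ => ig_nonneg hpos x)
  exact max_le h1 h2

lemma pc_left (h : PiecewiseC1On w a b) (hc : c ∈ Icc a b) : PiecewiseC1On w a c := by
  obtain ⟨hcont, k, s, hs, h0, hl, hp⟩ := h
  subst h0; subst hl
  exact aux_left k s hs hp hcont c hc.1 hc.2

end HLAux

open HLAux

/-- Temporal monotonicity and `Λ/4`-Lipschitz property of the Hopf–Lax semigroup. -/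
theorem stmt12 (T Λ : ℝ) (hT : 0 < T) (hΛ : 0 < Λ) (lam : ℝ → ℝ → ℝ)
    (hmeas : Measurable (Function.uncurry lam))
    (hpos : ∀ t ξ, 0 < lam t ξ) (hbd : ∀ t ξ, lam t ξ ≤ Λ)
    (f : ℝ → ℝ) (hf : ∀ ξ ξ' : ℝ, ξ ≤ ξ' → 0 ≤ f ξ' - f ξ ∧ f ξ' - f ξ ≤ ξ' - ξ) :
    ∀ ξ : ℝ, ∀ t t' : ℝ, 0 ≤ t → t ≤ t' → t' ≤ T →
      0 ≤ hopfLax lam f t' ξ - hopfLax lam f t ξ ∧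
        hopfLax lam f t' ξ - hopfLax lam f t ξ ≤ Λ / 4 * (t' - t) := by
  intro ξ t t' ht htt' hT'
  -- the admissible cost set
  set S : ℝ → Set ℝ := fun τ => {y : ℝ | ∃ w : ℝ → ℝ, PiecewiseC1On w 0 τ ∧ w τ = ξ ∧
    y = (∫ s in (0:ℝ)..τ, ig lam w s) + f (w 0)} with hS
  have hdef : ∀ τ : ℝ, hopfLax lam f τ ξ = sInf (S τ) := fun τ => rfl
  -- nonemptiness via the constant path
  have hSne : ∀ τ : ℝ, 0 ≤ τ → ((∫ s in (0:ℝ)..τ, ig lam (fun _ => ξ) s) + f ξ) ∈ S τ := by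
    intro τ hτ
    refine ⟨fun _ => ξ, ?_, rfl, rfl⟩
    rcases eq_or_lt_of_le hτ with rfl | hτ
    · exact pc_refl continuousOn_const
    · exact pc_two hτ continuousOn_const contDiffOn_const
  -- lower bound for all costs
  have hlb : ∀ τ : ℝ, 0 ≤ τ → ∀ y ∈ S τ, f ξ ≤ y := by
    intro τ hτ y hy
    obtain ⟨w, hwpc, hwt, rfl⟩ := hy
    have h1 : max (ξ - w 0) 0 ≤ ∫ x in (0:ℝ)..τ, ig lam w x := by
      have := pc_lower hmeas hpos hbd hwpc (c := 0) ⟨le_rfl, hτ⟩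
      rwa [hwt] at this
    rcases le_or_gt (w 0) ξ with h | h
    · have h2 := (hf (w 0) ξ h).2
      have h3 := le_max_left (ξ - w 0) 0
      linarith
    · have h2 := (hf ξ (w 0) h.le).1
      have h3 := le_max_right (ξ - w 0) 0
      linarith
  have hbdd : ∀ τ : ℝ, BddBelow (S τ) → True := fun _ _ => trivial
  have hBdd : ∀ τ : ℝ, 0 ≤ τ → BddBelow (S τ) := fun τ hτ => ⟨f ξ, fun y hy => hlb τ hτ y hy⟩
  constructor
  · -- monotonicity : sInf (S t) ≤ sInf (S t')
    rw [hdef, hdef, sub_nonneg]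
    rcases eq_or_lt_of_le htt' with rfl | hlt
    · exact le_rfl
    refine le_csInf ⟨_, hSne t' (le_trans ht htt')⟩ ?_
    rintro y' ⟨w, hwpc, hwt', rfl⟩
    rcases eq_or_lt_of_le ht with rfl | htpos
    · -- t = 0 : sInf (S 0) = f ξ essentially
      have h1 : sInf (S 0) ≤ (∫ s in (0:ℝ)..0, ig lam (fun _ => ξ) s) + f ξ :=
        csInf_le (hBdd 0 le_rfl) (hSne 0 le_rfl)
      rw [intervalIntegral.integral_same, zero_add] at h1
      exact le_trans h1 (hlb t' htt' _ ⟨w, hwpc, hwt', rfl⟩)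
    -- 0 < t < t'
    refine le_of_forall_pos_le_add ?_
    intro δ hδ
    set ε : ℝ := min t (4 * δ / Λ) with hε
    have hε0 : 0 < ε := lt_min htpos (by positivity)
    have hεt : ε ≤ t := min_le_left _ _
    have hεδ : Λ / 4 * ε ≤ δ := by
      have h1 : ε ≤ 4 * δ / Λ := min_le_right _ _
      rw [div_mul_eq_mul_div, div_le_iff₀ (by norm_num : (0:ℝ) < 4)]
      calc Λ * ε ≤ Λ * (4 * δ / Λ) := by nlinarith
        _ = δ * 4 := by field_simp
    set c : ℝ := t - ε with hc
    have hc0 : 0 ≤ c := by simp [hc]; linarith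
    have hct : c < t := by simp [hc]; linarith
    have hct' : c ≤ t' := by linarith
    have hw0c : PiecewiseC1On w 0 c := pc_left hwpc ⟨hc0, hct'⟩
    -- the sprint path
    set V : ℝ → ℝ := fun s => w (min s c) + (ξ - w c) * ((max s c - c) / ε) with hV
    have hVeq : EqOn V w (Icc 0 c) := by
      intro x hx
      simp only [hV]
      rw [min_eq_left hx.2, max_eq_right hx.2]
      simp
    have hVc : PiecewiseC1On V 0 c := pc_congr hVeq hw0c
    have hVcont : ContinuousOn V (Icc 0 t) := by
      apply ContinuousOn.add
      · apply hwpc.1.comp ((continuous_id.min continuous_const).continuousOn)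
        intro x hx
        exact ⟨le_min hx.1 hc0, le_trans (min_le_right _ _) hct'⟩
      · exact (continuous_const.mul ((((continuous_id.max continuous_const).sub
          continuous_const)).div_const ε)).continuousOn
    have hVlin : EqOn V (fun s => w c + (ξ - w c) * ((s - c) / ε)) (Icc c t) := by
      intro x hx
      simp only [hV]
      rw [min_eq_right hx.1, max_eq_left hx.1]
    have hVlast : ContDiffOn ℝ 1 V (Icc c t) := by
      apply ContDiffOn.congr _ hVlin
      exact (contDiff_const.add (contDiff_const.mul
        ((contDiff_id.sub contDiff_const).div_const ε))).contDiffOn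
    have hVpc : PiecewiseC1On V 0 t := pc_snoc hVc hct hVcont hVlast
    have hVt : V t = ξ := by
      simp only [hV]
      rw [min_eq_right hct.le, max_eq_left hct.le]
      have : (t - c) / ε = 1 := by
        rw [hc]; field_simp; ring
      rw [this]; ring
    have hV0 : V 0 = w 0 := hVeq ⟨le_rfl, hc0⟩
    -- membership
    have hmem : ((∫ s in (0:ℝ)..t, ig lam V s) + f (V 0)) ∈ S t := ⟨V, hVpc, hVt, rfl⟩
    refine le_trans (csInf_le (hBdd t ht) hmem) ?_
    have hVeq' : ∀ y : ℝ, y ≤ c → V y = w y := by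
      intro y hy
      simp only [hV]
      rw [min_eq_left hy, max_eq_right hy]
      simp
    have hVlin' : ∀ y : ℝ, c ≤ y → V y = w c + (ξ - w c) * ((y - c) / ε) := by
      intro y hy
      simp only [hV]
      rw [min_eq_right hy, max_eq_left hy]
    have h0t' : (0:ℝ) ≤ t' := le_trans ht htt'
    -- split the integrals
    have hiV : IntervalIntegrable (ig lam V) volume 0 t := pc_int hmeas hpos hbd hVpc
    have hiV1 : IntervalIntegrable (ig lam V) volume 0 c :=
      hiV.mono_set (by rw [uIcc_of_le hc0, uIcc_of_le ht]; exact Icc_subset_Icc le_rfl hct.le)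
    have hiV2 : IntervalIntegrable (ig lam V) volume c t :=
      hiV.mono_set (by rw [uIcc_of_le hct.le, uIcc_of_le ht]; exact Icc_subset_Icc hc0 le_rfl)
    have hiw : IntervalIntegrable (ig lam w) volume 0 t' := pc_int hmeas hpos hbd hwpc
    have hiw1 : IntervalIntegrable (ig lam w) volume 0 c :=
      hiw.mono_set (by rw [uIcc_of_le hc0, uIcc_of_le h0t']; exact Icc_subset_Icc le_rfl hct')
    have hiw2 : IntervalIntegrable (ig lam w) volume c t' :=
      hiw.mono_set (by rw [uIcc_of_le hct', uIcc_of_le h0t']; exact Icc_subset_Icc hc0 le_rfl)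
    have hsplitV : (∫ s in (0:ℝ)..t, ig lam V s)
        = (∫ s in (0:ℝ)..c, ig lam V s) + ∫ s in c..t, ig lam V s :=
      (integral_add_adjacent_intervals hiV1 hiV2).symm
    have hsplitw : (∫ s in (0:ℝ)..t', ig lam w s)
        = (∫ s in (0:ℝ)..c, ig lam w s) + ∫ s in c..t', ig lam w s :=
      (integral_add_adjacent_intervals hiw1 hiw2).symm
    have hne : ∀ᵐ (x : ℝ) ∂(volume : Measure ℝ), x ≠ c := by
      rw [ae_iff]
      have : {x : ℝ | ¬x ≠ c} = {c} := by ext x; simp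
      rw [this]
      exact measure_singleton c
    have hcongr : (∫ s in (0:ℝ)..c, ig lam V s) = ∫ s in (0:ℝ)..c, ig lam w s := by
      apply intervalIntegral.integral_congr_ae
      filter_upwards [hne] with x hx hxI
      rw [uIoc_of_le hc0] at hxI
      have hxc : x < c := lt_of_le_of_ne hxI.2 hx
      have hev : V =ᶠ[nhds x] w :=
        Filter.eventuallyEq_of_mem (Iio_mem_nhds hxc) (fun y hy => hVeq' y (le_of_lt hy))
      simp only [ig, hev.deriv_eq, hVeq' x hxc.le]
    have hsprint : (∫ s in c..t, ig lam V s) ≤ max (ξ - w c) 0 + Λ / 4 * ε := by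
      have hK : ∀ x ∈ Ioc c t, ig lam V x ≤ max (ξ - w c) 0 / ε + Λ / 4 := by
        intro x hx
        have hev : V =ᶠ[nhds x] (fun s => w c + (ξ - w c) * ((s - c) / ε)) :=
          Filter.eventuallyEq_of_mem (Ioi_mem_nhds hx.1) (fun y hy => hVlin' y (le_of_lt hy))
        have hda : HasDerivAt (fun s : ℝ => w c + (ξ - w c) * ((s - c) / ε))
            ((ξ - w c) * (1 / ε)) x := by
          exact (((hasDerivAt_id x).sub_const c).div_const ε).const_mul (ξ - w c) |>.const_add (w c)
        have hd : deriv V x = (ξ - w c) / ε := by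
          rw [hev.deriv_eq, hda.deriv]; ring
        have hkey := key_le (c := deriv V x) (hpos x (V x)) (hbd x (V x))
        have : ig lam V x ≤ max ((ξ - w c) / ε) 0 + Λ / 4 := by
          simpa only [ig, hd] using hkey
        have hmax : max ((ξ - w c) / ε) 0 = max (ξ - w c) 0 / ε := by
          rw [← max_div_div_right hε0.le, zero_div]
        linarith [hmax ▸ this]
      rw [integral_of_le hct.le]
      have hi2 : IntegrableOn (ig lam V) (Ioc c t) volume := hiV2.1
      have hmono := setIntegral_mono_on hi2 (integrableOn_const
        (by rw [Real.volume_Ioc]; exact ENNReal.ofReal_ne_top)) measurableSet_Ioc hK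
      have hconst : (∫ _x in Ioc c t, (max (ξ - w c) 0 / ε + Λ / 4)) = max (ξ - w c) 0 + Λ / 4 * ε := by
        rw [setIntegral_const, Real.volume_real_Ioc_of_le (by linarith), smul_eq_mul]
        have htc : t - c = ε := by rw [hc]; ring
        rw [htc]
        field_simp
      rw [hconst] at hmono
      exact hmono
    have hwlow : max (ξ - w c) 0 ≤ ∫ s in c..t', ig lam w s := by
      have := pc_lower hmeas hpos hbd hwpc ⟨hc0, hct'⟩
      rwa [hwt'] at this
    have ef : f (V 0) = f (w 0) := by rw [hV0]
    linarith
  · -- Lipschitz upper bound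
    rw [hdef, hdef, sub_le_iff_le_add]
    rcases eq_or_lt_of_le htt' with rfl | hlt
    · simp
    have h0t' : (0:ℝ) ≤ t' := le_trans ht htt'
    rw [← sub_le_iff_le_add']
    refine le_csInf ⟨_, hSne t ht⟩ ?_
    rintro y ⟨w, hwpc, hwt, rfl⟩
    rw [sub_le_iff_le_add]
    set W : ℝ → ℝ := fun s => w (min s t) with hW
    have hWeq : ∀ y : ℝ, y ≤ t → W y = w y := by
      intro y hy; simp only [hW]; rw [min_eq_left hy]
    have hWpt : PiecewiseC1On W 0 t := pc_congr (fun x hx => hWeq x hx.2) hwpc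
    have hWcont : ContinuousOn W (Icc 0 t') := by
      apply hwpc.1.comp ((continuous_id.min continuous_const).continuousOn)
      intro x hx
      exact ⟨le_min hx.1 ht, min_le_right _ _⟩
    have hWconst : ∀ y : ℝ, t ≤ y → W y = w t := by
      intro y hy; simp only [hW]; rw [min_eq_right hy]
    have hWlast : ContDiffOn ℝ 1 W (Icc t t') :=
      contDiffOn_const.congr (fun x hx => hWconst x hx.1)
    have hWpc : PiecewiseC1On W 0 t' := pc_snoc hWpt hlt hWcont hWlast
    have hWt' : W t' = ξ := by rw [hWconst t' hlt.le, hwt]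
    have hW0 : W 0 = w 0 := hWeq 0 ht
    have hmem : ((∫ s in (0:ℝ)..t', ig lam W s) + f (W 0)) ∈ S t' := ⟨W, hWpc, hWt', rfl⟩
    refine le_trans (csInf_le (hBdd t' h0t') hmem) ?_
    have hiW : IntervalIntegrable (ig lam W) volume 0 t' := pc_int hmeas hpos hbd hWpc
    have hiW1 : IntervalIntegrable (ig lam W) volume 0 t :=
      hiW.mono_set (by rw [uIcc_of_le ht, uIcc_of_le h0t']; exact Icc_subset_Icc le_rfl htt')
    have hiW2 : IntervalIntegrable (ig lam W) volume t t' :=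
      hiW.mono_set (by rw [uIcc_of_le htt', uIcc_of_le h0t']; exact Icc_subset_Icc ht le_rfl)
    have hsplitW : (∫ s in (0:ℝ)..t', ig lam W s)
        = (∫ s in (0:ℝ)..t, ig lam W s) + ∫ s in t..t', ig lam W s :=
      (integral_add_adjacent_intervals hiW1 hiW2).symm
    have hne : ∀ᵐ (x : ℝ) ∂(volume : Measure ℝ), x ≠ t := by
      rw [ae_iff]
      have : {x : ℝ | ¬x ≠ t} = {t} := by ext x; simp
      rw [this]
      exact measure_singleton t
    have hcongr : (∫ s in (0:ℝ)..t, ig lam W s) = ∫ s in (0:ℝ)..t, ig lam w s := by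
      apply intervalIntegral.integral_congr_ae
      filter_upwards [hne] with x hx hxI
      rw [uIoc_of_le ht] at hxI
      have hxt : x < t := lt_of_le_of_ne hxI.2 hx
      have hev : W =ᶠ[nhds x] w :=
        Filter.eventuallyEq_of_mem (Iio_mem_nhds hxt) (fun y hy => hWeq y (le_of_lt hy))
      simp only [ig, hev.deriv_eq, hWeq x hxt.le]
    have htail : (∫ s in t..t', ig lam W s) ≤ Λ / 4 * (t' - t) := by
      have hK : ∀ x ∈ Ioc t t', ig lam W x ≤ Λ / 4 := by
        intro x hx
        have hev : W =ᶠ[nhds x] (fun _ => w t) :=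
          Filter.eventuallyEq_of_mem (Ioi_mem_nhds hx.1) (fun y hy => hWconst y (le_of_lt hy))
        have hd : deriv W x = 0 := by rw [hev.deriv_eq, deriv_const]
        have : ig lam W x = lam x (W x) * (1 / 4) := by
          simp only [ig, hd, zero_div, kernel_zero]
        rw [this]
        have h1 := hbd x (W x)
        linarith
      rw [integral_of_le hlt.le]
      have hi2 : IntegrableOn (ig lam W) (Ioc t t') volume := hiW2.1
      have hmono := setIntegral_mono_on hi2 (integrableOn_const
        (by rw [Real.volume_Ioc]; exact ENNReal.ofReal_ne_top)) measurableSet_Ioc hK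
      have hconst : (∫ _x in Ioc t t', (Λ / 4 : ℝ)) = Λ / 4 * (t' - t) := by
        rw [setIntegral_const, Real.volume_real_Ioc_of_le (by linarith), smul_eq_mul]
        ring
      rw [hconst] at hmono
      exact hmono
    have ef : f (W 0) = f (w 0) := by rw [hW0]
    linarith
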